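/- Let f₀ be the uniform probability measure on the unit circle in ℝ² and let γ ∈ (−2, −1). Then for every v ∈ ℝ² with |v| = 1, ∫_{ℝ²} |v − v_*|^γ 1_{v_* ≠ v} f₀(dv_*) = +∞. -/

import Mathlib

open MeasureTheory

lemma stmt13_meas_rpow (γ : ℝ) : Measurable fun x : ℝ => x ^ γ := by
  simp only [Real.rpow_def, Complex.cpow_def]
  apply Complex.measurable_re.comp
  apply Measurable.ite
  · exact Complex.measurable_ofReal (measurableSet_singleton 0)
  · exact measurable_const
  · exact Complex.measurable_exp.comp
      ((Complex.measurable_log.comp Complex.measurable_ofReal).mul_const _)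

lemma stmt13_aux (γ : ℝ) (hγ1 : γ < -1) {δ : ℝ} (hδ : 0 < δ) :
    ∫⁻ t in Set.Ioo 0 δ, ENNReal.ofReal (t ^ γ) = ⊤ := by
  by_contra h
  have hint : IntegrableOn (fun t : ℝ => t ^ γ) (Set.Ioo 0 δ) := by
    constructor
    · exact (stmt13_meas_rpow γ).aestronglyMeasurable
    · rw [hasFiniteIntegral_iff_ofReal]
      · exact lt_top_iff_ne_top.2 h
      · filter_upwards [ae_restrict_mem measurableSet_Ioo] with t ht
        exact Real.rpow_nonneg ht.1.le γ
  rw [intervalIntegral.integrableOn_Ioo_rpow_iff hδ] at hint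
  linarith

/-- For `f₀` the uniform probability measure on the unit circle and
`γ ∈ (-2,-1)`, for every `v` on the circle, `∫ |v - v_*|^γ 1_{v_* ≠ v} f₀(dv_*) = ∞`. -/
theorem stmt13 (γ : ℝ) (hγ : γ ∈ Set.Ioo (-2:ℝ) (-1))
    (f₀ : Measure ℂ)
    (hf₀ : f₀ = (ENNReal.ofReal (2 * Real.pi))⁻¹ •
      Measure.map (fun α : ℝ => Complex.exp (α * Complex.I))
        (volume.restrict (Set.Ioc (-Real.pi) Real.pi)))
    (v : ℂ) (hv : ‖v‖ = 1) :
    ∫⁻ w in {w : ℂ | w ≠ v}, ENNReal.ofReal (‖v - w‖ ^ γ) ∂f₀ = ⊤ := by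
  obtain ⟨hγ2, hγ1⟩ := hγ
  have hπ : (0:ℝ) < Real.pi := Real.pi_pos
  set α₀ := Complex.arg v with hα₀def
  have hα₀l : -Real.pi < α₀ := Complex.neg_pi_lt_arg v
  have hα₀r : α₀ ≤ Real.pi := Complex.arg_le_pi v
  have hve : Complex.exp (α₀ * Complex.I) = v := by
    have h := Complex.norm_mul_exp_arg_mul_I v
    rw [hv] at h
    simpa using h
  set δ : ℝ := (α₀ + Real.pi) / 2 with hδdef
  have hδpos : 0 < δ := by simp only [hδdef]; linarith
  have hδle : δ < 2 * Real.pi := by simp only [hδdef]; linarith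
  set e : ℝ → ℂ := fun α => Complex.exp (α * Complex.I) with hedef
  have he : Measurable e :=
    Complex.measurable_exp.comp ((Complex.measurable_ofReal).mul measurable_const)
  have hsetm : MeasurableSet {w : ℂ | w ≠ v} :=
    (measurableSet_singleton v).compl
  have hg : Measurable (fun w : ℂ => ENNReal.ofReal (‖v - w‖ ^ γ)) :=
    ENNReal.measurable_ofReal.comp
      ((stmt13_meas_rpow γ).comp ((measurable_const.sub measurable_id).norm))
  -- key facts on the interval S
  set S : Set ℝ := Set.Ioo (α₀ - δ) α₀ with hSdef
  have hkey : ∀ α ∈ S, e α ≠ v ∧ ‖v - e α‖ ≤ α₀ - α := by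
    intro α hα
    obtain ⟨hα1, hα2⟩ := hα
    have hne : e α ≠ v := by
      intro hcon
      rw [← hve, hedef] at hcon
      rw [Complex.exp_eq_exp_iff_exists_int] at hcon
      obtain ⟨n, hn⟩ := hcon
      have him : α = α₀ + n * (2 * Real.pi) := by
        have := congrArg Complex.im hn
        simpa [Complex.ofReal_mul] using this
      have hn0 : n = 0 := by
        rcases lt_trichotomy n 0 with h | h | h
        · have hι : n ≤ -1 := by omega
          have : (n:ℝ) ≤ -1 := by exact_mod_cast hι
          nlinarith
        · exact h
        · have : (1:ℝ) ≤ (n:ℝ) := by exact_mod_cast h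
          nlinarith
      rw [hn0] at him
      simp at him
      exact absurd him (ne_of_lt hα2)
    refine ⟨hne, ?_⟩
    have hlip := lipschitzWith_circleMap (0:ℂ) 1
    have hd := hlip.dist_le_mul α₀ α
    simp only [circleMap_zero, Complex.ofReal_one, one_mul] at hd
    rw [← hve]
    calc ‖Complex.exp (α₀ * Complex.I) - e α‖
        = dist (Complex.exp (α₀ * Complex.I)) (Complex.exp (α * Complex.I)) := by
          rw [dist_eq_norm]
      _ ≤ |α₀ - α| := by
          simpa [Real.dist_eq, Real.coe_nnabs] using hd
      _ = α₀ - α := abs_of_pos (by linarith)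
  -- lower bound the set integral
  have hSsub : S ⊆ (fun α : ℝ => Complex.exp (α * Complex.I)) ⁻¹' {w | w ≠ v} ∩
      Set.Ioc (-Real.pi) Real.pi := by
    intro α hα
    refine ⟨(hkey α hα).1, ?_, ?_⟩
    · have := hα.1; simp only [hδdef] at this ⊢; linarith
    · exact le_of_lt (lt_of_lt_of_le hα.2 hα₀r)
  have hT : ∫⁻ α in S, ENNReal.ofReal ((α₀ - α) ^ γ) = ⊤ := by
    have hemb : MeasurableEmbedding (fun t : ℝ => α₀ - t) :=
      (Homeomorph.subLeft α₀).measurableEmbedding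
    have hmp : MeasurePreserving (fun t : ℝ => α₀ - t) volume volume :=
      Measure.measurePreserving_sub_left volume α₀
    have hpre : (fun t : ℝ => α₀ - t) ⁻¹' Set.Ioo 0 δ = S := by
      ext x
      simp only [Set.mem_preimage, Set.mem_Ioo, hSdef]
      constructor <;> rintro ⟨h1, h2⟩ <;> constructor <;> linarith
    have := hmp.setLIntegral_comp_preimage_emb hemb
      (fun t => ENNReal.ofReal (t ^ γ)) (Set.Ioo 0 δ)
    rw [hpre] at this
    rw [this]
    exact stmt13_aux γ hγ1 hδpos
  have hmain : ∫⁻ α in (fun α : ℝ => Complex.exp (α * Complex.I)) ⁻¹' {w | w ≠ v} ∩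
      Set.Ioc (-Real.pi) Real.pi,
      ENNReal.ofReal (‖v - Complex.exp (α * Complex.I)‖ ^ γ) = ⊤ := by
    rw [eq_top_iff, ← hT]
    refine le_trans ?_ (lintegral_mono_set hSsub)
    refine setLIntegral_mono (hg.comp he) ?_
    intro α hα
    obtain ⟨hne, hle⟩ := hkey α hα
    apply ENNReal.ofReal_le_ofReal
    apply Real.rpow_le_rpow_of_nonpos
    · rw [norm_pos_iff, sub_ne_zero]
      exact fun h => hne h.symm
    · exact hle
    · linarith
  rw [hf₀, Measure.restrict_smul, lintegral_smul_measure,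
    Measure.restrict_map he hsetm, lintegral_map hg he,
    Measure.restrict_restrict (he hsetm), hmain]
  rw [smul_eq_mul, ENNReal.mul_top]
  simp [Real.pi_ne_zero, Real.pi_pos.le, ENNReal.mul_eq_top]
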